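/- Let A be a finite abelian group of order a, H a torsion-free abelian group, q in [0,1], p in [0, (1-q)/2), f: A -> H a map with |{b in A : f(b)=0}| <= q*a, and S a subset of A with |S| <= p*a. Then the set P_S(f) = {(b,c) in A x A : f(b+c) != f(b) + f(c) and b+c not in S} has cardinality at least (a*(1-q-2p)/2) * (a*(1-q-2p)/2 + 1). -/

import Mathlib

set_option maxHeartbeats 1000000

open Finset


lemma tri_mul_two (n s : ℕ) :
    (∑ k ∈ Finset.range n, (k + 1 - s)) * 2 = (n - s) * (n - s + 1) := by
  induction n with
  | zero => simp
  | succ n ih =>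
    rw [Finset.sum_range_succ, Nat.add_mul, ih]
    rcases Nat.lt_or_ge n s with h | h
    · have h1 : n + 1 - s = 0 := by omega
      have h2 : n - s = 0 := by omega
      simp [h1, h2]
    · obtain ⟨d, hd⟩ : ∃ d, n + 1 - s = d + 1 := ⟨n - s, by omega⟩
      have h2 : n - s = d := by omega
      rw [hd, h2]
      ring


lemma core' {A : Type*} [AddCommGroup A] [Fintype A] [DecidableEq A]
    {L : Type*} [AddCommGroup L] [LinearOrder L] [IsOrderedAddMonoid L] (g : A → L) (S : Finset A) :
    ∑ k ∈ Finset.range (Finset.univ.filter (fun x => 0 < g x)).card, (k + 1 - S.card) ≤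
      (((Finset.univ.filter (fun x => 0 < g x)) ×ˢ (Finset.univ.filter (fun x => 0 < g x))).filter
        (fun bc => g (bc.1 + bc.2) ≠ g bc.1 + g bc.2 ∧ bc.1 + bc.2 ∉ S)).card := by
  classical
  set T := Finset.univ.filter (fun x => 0 < g x) with hTdef
  have hTmem : ∀ {y : A}, y ∈ T ↔ 0 < g y := by
    intro y; simp [hTdef]
  set n := T.card with hn
  set s := S.card with hs
  have hcardT : Fintype.card ↥T = n := Fintype.card_coe T
  let e : ↥T ≃ Fin n := Fintype.equivFinOfCardEq hcardT
  let σ := Tuple.sort (fun i => g ((e.symm i : A)))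
  set x : Fin n → A := fun i => (e.symm (σ i) : A) with hx
  have hxinj : Function.Injective x := by
    intro i j hij
    have : e.symm (σ i) = e.symm (σ j) := Subtype.ext hij
    exact σ.injective (e.symm.injective this)
  have hmono : Monotone (fun i => g (x i)) :=
    Tuple.monotone_sort (fun i => g ((e.symm i : A)))
  have hxmem : ∀ i, x i ∈ T := fun i => (e.symm (σ i)).2
  have hxsurj : ∀ z ∈ T, ∃ i, x i = z := by
    intro z hz
    refine ⟨σ.symm (e ⟨z, hz⟩), ?_⟩
    simp [hx]
  -- per-k bound
  have key : ∀ k : Fin n, (k : ℕ) + 1 - s ≤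
      (T.filter (fun y => g (x k + y) ≠ g (x k) + g y ∧ x k + y ∉ S)).card := by
    intro k
    have hsplit := Finset.card_filter_add_card_filter_not
      (s := T) (p := fun y => g (x k + y) ≠ g (x k) + g y ∧ x k + y ∉ S)
    set U := Finset.univ.filter (fun z => g (x k) < g z) with hU
    have hUcard : U.card ≤ n - 1 - k := by
      have hsub : U ⊆ (Finset.univ.filter (fun j : Fin n => k < j)).image x := by
        intro z hz
        have hgz : g (x k) < g z := by simpa [hU] using hz
        have hzT : z ∈ T := hTmem.mpr (lt_trans (hTmem.mp (hxmem k)) hgz)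
        obtain ⟨j, rfl⟩ := hxsurj z hzT
        have hkj : k < j := by
          by_contra hle
          exact absurd (hmono (not_lt.mp hle)) (not_le.mpr hgz)
        exact Finset.mem_image.mpr ⟨j, by simp [hkj], rfl⟩
      calc U.card ≤ ((Finset.univ.filter (fun j : Fin n => k < j)).image x).card :=
              Finset.card_le_card hsub
        _ ≤ (Finset.univ.filter (fun j : Fin n => k < j)).card := Finset.card_image_le
        _ = n - 1 - k := by
              rw [Finset.filter_lt_eq_Ioi]
              exact Fin.card_Ioi k
    have hGood : (T.filter (fun y => ¬(g (x k + y) ≠ g (x k) + g y ∧ x k + y ∉ S))).card ≤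
        (n - 1 - k) + s := by
      have hmaps : ∀ y ∈ T.filter (fun y => ¬(g (x k + y) ≠ g (x k) + g y ∧ x k + y ∉ S)),
          x k + y ∈ U ∪ S := by
        intro y hy
        rw [Finset.mem_filter] at hy
        obtain ⟨hyT, hyc⟩ := hy
        rw [not_and_or, not_not, not_not] at hyc
        rcases hyc with hgood | hmem
        · refine Finset.mem_union_left _ ?_
          rw [hU, Finset.mem_filter]
          refine ⟨Finset.mem_univ _, ?_⟩
          rw [hgood]
          exact lt_add_of_pos_right _ (hTmem.mp hyT)
        · exact Finset.mem_union_right _ hmem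
      have hinj : ∀ y₁ ∈ T.filter (fun y => ¬(g (x k + y) ≠ g (x k) + g y ∧ x k + y ∉ S)),
          ∀ y₂ ∈ T.filter (fun y => ¬(g (x k + y) ≠ g (x k) + g y ∧ x k + y ∉ S)),
          x k + y₁ = x k + y₂ → y₁ = y₂ := by
        intro y₁ _ y₂ _ h
        exact add_left_cancel h
      calc (T.filter (fun y => ¬(g (x k + y) ≠ g (x k) + g y ∧ x k + y ∉ S))).card
          ≤ (U ∪ S).card := Finset.card_le_card_of_injOn _ hmaps hinj
        _ ≤ U.card + S.card := Finset.card_union_le _ _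
        _ ≤ (n - 1 - k) + s := by omega
    have hkn : (k : ℕ) < n := k.2
    omega
  -- assemble
  set Bad := fun k : Fin n =>
    (T.filter (fun y => g (x k + y) ≠ g (x k) + g y ∧ x k + y ∉ S)).image (fun y => (x k, y))
    with hBad
  have hdisj : ∀ k₁ ∈ (Finset.univ : Finset (Fin n)), ∀ k₂ ∈ Finset.univ, k₁ ≠ k₂ →
      Disjoint (Bad k₁) (Bad k₂) := by
    intro k₁ _ k₂ _ hne
    rw [Finset.disjoint_left]
    intro bc h1 h2
    rw [hBad, Finset.mem_image] at h1 h2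
    obtain ⟨y₁, _, rfl⟩ := h1
    obtain ⟨y₂, _, he⟩ := h2
    exact hne (hxinj (congrArg Prod.fst he.symm))
  have hsubset : (Finset.univ : Finset (Fin n)).biUnion Bad ⊆
      (T ×ˢ T).filter (fun bc => g (bc.1 + bc.2) ≠ g bc.1 + g bc.2 ∧ bc.1 + bc.2 ∉ S) := by
    intro bc hbc
    rw [Finset.mem_biUnion] at hbc
    obtain ⟨k, _, hk⟩ := hbc
    rw [hBad, Finset.mem_image] at hk
    obtain ⟨y, hy, rfl⟩ := hk
    rw [Finset.mem_filter] at hy ⊢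
    exact ⟨Finset.mem_product.mpr ⟨hxmem k, hy.1⟩, hy.2⟩
  calc ∑ k ∈ Finset.range n, (k + 1 - s)
      = ∑ k : Fin n, ((k : ℕ) + 1 - s) := (Fin.sum_univ_eq_sum_range (fun k => k + 1 - s) n).symm
    _ ≤ ∑ k : Fin n, (Bad k).card := by
        refine Finset.sum_le_sum (fun k _ => ?_)
        rw [hBad, Finset.card_image_of_injective _ (fun y₁ y₂ h => by
          exact (Prod.ext_iff.mp h).2)]
        exact key k
    _ = ((Finset.univ : Finset (Fin n)).biUnion Bad).card := (Finset.card_biUnion hdisj).symm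
    _ ≤ _ := Finset.card_le_card hsubset

theorem almost_hom_almost_zero_strengthened {A H : Type*} [AddCommGroup A] [Fintype A]
    [AddCommGroup H]
    (htf : ∀ (m : ℤ) (h : H), m ≠ 0 → m • h = 0 → h = 0)
    (a : ℕ) (ha : Fintype.card A = a)
    (q : ℚ) (hq0 : 0 ≤ q) (hq1 : q ≤ 1)
    (p : ℚ) (hp0 : 0 ≤ p) (hp : p < (1 - q) / 2)
    (f : A → H)
    (hZ : (Nat.card {b : A // f b = 0} : ℚ) ≤ q * a)
    (S : Set A) (hS : (Nat.card S : ℚ) ≤ p * a) :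
    ((a : ℚ) * (1 - q - 2 * p) / 2) * ((a : ℚ) * (1 - q - 2 * p) / 2 + 1) ≤
      (Nat.card {x : A × A // f (x.1 + x.2) ≠ f x.1 + f x.2 ∧ x.1 + x.2 ∉ S} : ℚ) := by
  classical
  haveI : NoZeroSMulDivisors ℤ H :=
    ⟨fun {c x} h => or_iff_not_imp_left.mpr (fun hc => htf c x hc h)⟩
  set M : Submodule ℤ H := Submodule.span ℤ (Set.range f) with hMdef
  haveI : Module.Finite ℤ M := Module.Finite.span_of_finite ℤ (Set.finite_range f)
  haveI : Module.Free ℤ M := inferInstance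
  set ι := Module.Free.ChooseBasisIndex ℤ M with hι
  set nB := Fintype.card ι with hnB
  let b : Module.Basis (Fin nB) ℤ M := (Module.Free.chooseBasis ℤ M).reindex (Fintype.equivFin ι)
  let L := Lex (Fin nB →₀ ℤ)
  let φ : M → L := fun u => toLex (b.repr u)
  have hφadd : ∀ u v : M, φ (u + v) = φ u + φ v := by
    intro u v
    show toLex (b.repr (u + v)) = toLex (b.repr u) + toLex (b.repr v)
    rw [map_add]
    rfl
  have hφinj : Function.Injective φ := fun u v h => b.repr.injective (toLex.injective h)
  have hφ0 : φ 0 = 0 := by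
    show toLex (b.repr 0) = 0
    rw [map_zero]
    rfl
  have hmem : ∀ x : A, f x ∈ M := fun x => Submodule.subset_span ⟨x, rfl⟩
  set g : A → L := fun x => φ ⟨f x, hmem x⟩ with hgdef
  have key1 : ∀ x, (g x = 0 ↔ f x = 0) := by
    intro x
    constructor
    · intro h
      have := hφinj (h.trans hφ0.symm)
      simpa [Subtype.ext_iff] using this
    · intro h
      have : (⟨f x, hmem x⟩ : M) = 0 := by simpa [Subtype.ext_iff] using h
      rw [hgdef]; simp only [this, hφ0]
  have key2 : ∀ u v : A, (g (u + v) = g u + g v ↔ f (u + v) = f u + f v) := by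
    intro u v
    have hsum : g u + g v = φ ⟨f u + f v, add_mem (hmem u) (hmem v)⟩ := by
      rw [hgdef]
      simp only
      rw [← hφadd]
      rfl
    rw [hgdef]
    simp only
    rw [hsum]
    constructor
    · intro h
      simpa [Subtype.ext_iff] using hφinj h
    · intro h
      congr 1
      exact Subtype.ext h
  -- finsets
  set Sf : Finset A := (Set.toFinite S).toFinset with hSfdef
  have hSfmem : ∀ {x : A}, x ∈ Sf ↔ x ∈ S := fun {x} => (Set.toFinite S).mem_toFinset
  set s := Sf.card with hsdef
  have hScard : (Nat.card S : ℚ) = (s : ℚ) := by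
    rw [Nat.card_coe_set_eq, Set.ncard_eq_toFinset_card S (Set.toFinite S)]
  set g' : A → L := fun x => -(g x) with hg'def
  set T1 := Finset.univ.filter (fun x : A => 0 < g x) with hT1
  set T2 := Finset.univ.filter (fun x : A => 0 < g' x) with hT2
  set T3 := Finset.univ.filter (fun x : A => f x = 0) with hT3
  set n1 := T1.card with hn1
  set n2 := T2.card with hn2
  set z := T3.card with hzdef
  have hzcard : Nat.card {b : A // f b = 0} = z := by
    rw [Nat.card_eq_fintype_card, Fintype.card_subtype]
  have hd23 : Disjoint T2 T3 := by
    rw [Finset.disjoint_left]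
    intro x h2 h3
    rw [hT2, Finset.mem_filter] at h2
    rw [hT3, Finset.mem_filter] at h3
    have h0 : g x = 0 := (key1 x).mpr h3.2
    rw [hg'def] at h2
    simp only [h0, neg_zero, lt_irrefl] at h2
    exact lt_irrefl _ h2.2
  have hd123 : Disjoint T1 (T2 ∪ T3) := by
    rw [Finset.disjoint_left]
    intro x h1 h23
    rw [hT1, Finset.mem_filter] at h1
    rcases Finset.mem_union.mp h23 with h2 | h3
    · rw [hT2, Finset.mem_filter] at h2
      rw [hg'def] at h2
      have := h2.2
      simp only at this
      exact absurd h1.2 (not_lt.mpr (le_of_lt (neg_pos.mp this)))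
    · rw [hT3, Finset.mem_filter] at h3
      have h0 : g x = 0 := (key1 x).mpr h3.2
      rw [h0] at h1
      exact lt_irrefl _ h1.2
  have hunion : T1 ∪ (T2 ∪ T3) = Finset.univ := by
    ext x
    simp only [Finset.mem_union, hT1, hT2, hT3, Finset.mem_filter, Finset.mem_univ, true_and,
      iff_true]
    rcases lt_trichotomy (g x) 0 with h | h | h
    · right; left
      rw [hg'def]
      simpa using h
    · right; right
      exact (key1 x).mp h
    · left; exact h
  have hpart : n1 + n2 + z = a := by
    have h1 : (T1 ∪ (T2 ∪ T3)).card = T1.card + (T2 ∪ T3).card :=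
      Finset.card_union_of_disjoint hd123
    have h2 : (T2 ∪ T3).card = T2.card + T3.card := Finset.card_union_of_disjoint hd23
    rw [hunion] at h1
    rw [Finset.card_univ, ha] at h1
    omega
  -- the big sets
  set PF := Finset.univ.filter
    (fun bc : A × A => f (bc.1 + bc.2) ≠ f bc.1 + f bc.2 ∧ bc.1 + bc.2 ∉ S) with hPF
  have hPcard : Nat.card {x : A × A // f (x.1 + x.2) ≠ f x.1 + f x.2 ∧ x.1 + x.2 ∉ S} =
      PF.card := by
    rw [Nat.card_eq_fintype_card, Fintype.card_subtype]
  set P1 := ((T1 ×ˢ T1).filter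
    (fun bc => g (bc.1 + bc.2) ≠ g bc.1 + g bc.2 ∧ bc.1 + bc.2 ∉ Sf)) with hP1
  set P2 := ((T2 ×ˢ T2).filter
    (fun bc => g' (bc.1 + bc.2) ≠ g' bc.1 + g' bc.2 ∧ bc.1 + bc.2 ∉ Sf)) with hP2
  have hc1 : ∑ k ∈ Finset.range n1, (k + 1 - s) ≤ P1.card := by
    have h := core' g Sf
    rw [hn1, hT1, hsdef, hP1, hT1]
    convert h using 2 <;> · ext bc; simp [Finset.mem_filter]
  have hc2 : ∑ k ∈ Finset.range n2, (k + 1 - s) ≤ P2.card := by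
    have h := core' g' Sf
    rw [hn2, hT2, hsdef, hP2, hT2]
    convert h using 2 <;> · ext bc; simp [Finset.mem_filter]
  have hP1sub : P1 ⊆ PF := by
    intro bc hbc
    rw [hP1, Finset.mem_filter] at hbc
    rw [hPF, Finset.mem_filter]
    refine ⟨Finset.mem_univ _, ?_, fun hmem => hbc.2.2 (hSfmem.mpr hmem)⟩
    intro heq
    exact hbc.2.1 ((key2 bc.1 bc.2).mpr heq)
  have hP2sub : P2 ⊆ PF := by
    intro bc hbc
    rw [hP2, Finset.mem_filter] at hbc
    rw [hPF, Finset.mem_filter]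
    refine ⟨Finset.mem_univ _, ?_, fun hmem => hbc.2.2 (hSfmem.mpr hmem)⟩
    intro heq
    apply hbc.2.1
    rw [hg'def]
    simp only
    rw [(key2 bc.1 bc.2).mpr heq, neg_add]
  have hdP : Disjoint P1 P2 := by
    rw [Finset.disjoint_left]
    intro bc h1 h2
    rw [hP1, Finset.mem_filter, Finset.mem_product] at h1
    rw [hP2, Finset.mem_filter, Finset.mem_product] at h2
    have ha1 : 0 < g bc.1 := by
      have := h1.1.1
      rw [hT1, Finset.mem_filter] at this
      exact this.2
    have ha2 : 0 < g' bc.1 := by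
      have := h2.1.1
      rw [hT2, Finset.mem_filter] at this
      exact this.2
    rw [hg'def] at ha2
    simp only [neg_pos] at ha2
    exact lt_irrefl _ (ha1.trans ha2)
  have hcount : (∑ k ∈ Finset.range n1, (k + 1 - s)) + (∑ k ∈ Finset.range n2, (k + 1 - s)) ≤
      PF.card := by
    calc (∑ k ∈ Finset.range n1, (k + 1 - s)) + (∑ k ∈ Finset.range n2, (k + 1 - s))
        ≤ P1.card + P2.card := Nat.add_le_add hc1 hc2
      _ = (P1 ∪ P2).card := (Finset.card_union_of_disjoint hdP).symm
      _ ≤ PF.card := Finset.card_le_card (Finset.union_subset hP1sub hP2sub)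
  -- rational arithmetic
  set X : ℚ := ((n1 - s : ℕ) : ℚ) with hX
  set Y : ℚ := ((n2 - s : ℕ) : ℚ) with hY
  have hX0 : 0 ≤ X := Nat.cast_nonneg _
  have hY0 : 0 ≤ Y := Nat.cast_nonneg _
  have hXge : (n1 : ℚ) - s ≤ X := by
    rcases Nat.le_total s n1 with h | h
    · rw [hX, Nat.cast_sub h]
    · have : n1 - s = 0 := by omega
      rw [hX, this]
      push_cast
      have : (n1 : ℚ) ≤ s := by exact_mod_cast h
      linarith
  have hYge : (n2 : ℚ) - s ≤ Y := by
    rcases Nat.le_total s n2 with h | h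
    · rw [hY, Nat.cast_sub h]
    · have : n2 - s = 0 := by omega
      rw [hY, this]
      push_cast
      have : (n2 : ℚ) ≤ s := by exact_mod_cast h
      linarith
  have hsum1 : ((∑ k ∈ Finset.range n1, (k + 1 - s) : ℕ) : ℚ) = X * (X + 1) / 2 := by
    have := tri_mul_two n1 s
    have hq : ((∑ k ∈ Finset.range n1, (k + 1 - s) : ℕ) : ℚ) * 2 = X * (X + 1) := by
      rw [hX]
      exact_mod_cast congrArg (Nat.cast : ℕ → ℚ) this
    linarith
  have hsum2 : ((∑ k ∈ Finset.range n2, (k + 1 - s) : ℕ) : ℚ) = Y * (Y + 1) / 2 := by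
    have := tri_mul_two n2 s
    have hq : ((∑ k ∈ Finset.range n2, (k + 1 - s) : ℕ) : ℚ) * 2 = Y * (Y + 1) := by
      rw [hY]
      exact_mod_cast congrArg (Nat.cast : ℕ → ℚ) this
    linarith
  have hPFQ : X * (X + 1) / 2 + Y * (Y + 1) / 2 ≤ (PF.card : ℚ) := by
    rw [← hsum1, ← hsum2]
    exact_mod_cast hcount
  rw [hPcard]
  have hzq : (z : ℚ) ≤ q * a := by
    rw [← hzcard]
    exact_mod_cast hZ
  have hsq : (s : ℚ) ≤ p * a := by
    rw [← hScard]
    exact hS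
  have hpartQ : (n1 : ℚ) + n2 + z = a := by exact_mod_cast hpart
  set m : ℚ := (a : ℚ) * (1 - q - 2 * p) / 2 with hm
  have hm0 : 0 ≤ m := by
    rw [hm]
    apply div_nonneg _ (by norm_num)
    apply mul_nonneg (Nat.cast_nonneg _)
    linarith
  have h2m : 2 * m ≤ X + Y := by
    have : (n1 : ℚ) + n2 - 2 * s ≤ X + Y := by linarith
    rw [hm]
    nlinarith
  refine le_trans ?_ hPFQ
  nlinarith [sq_nonneg (X - Y), mul_nonneg (sub_nonneg.mpr h2m)
    (by linarith : (0 : ℚ) ≤ X + Y + 2 * m + 2), sq_nonneg (X + Y - 2 * m)]
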